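/- Let F be a bipartite graph containing a cycle. Then there exists a constant γ > 0 such that ex(n, F) = Ω(n^{1+γ}). -/

import Mathlib

/-- `F` is contained in `G` as a subgraph. -/
def GContains {α β : Type*} (F : SimpleGraph α) (G : SimpleGraph β) : Prop :=
  ∃ f : α ↪ β, ∀ a b, F.Adj a b → G.Adj (f a) (f b)

/-- Turán number of `F` among graphs on `n` vertices. -/
noncomputable def exG {α : Type*} (F : SimpleGraph α) (n : ℕ) : ℕ :=
  sSup {k | ∃ G : SimpleGraph (Fin n), ¬ GContains F G ∧ G.edgeSet.ncard = k}

/-- Number of edges of a bipartite graph given as a relation between the two parts. -/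
noncomputable def bipCount {m n : ℕ} (B : Fin m → Fin n → Prop) : ℕ :=
  {p : Fin m × Fin n | B p.1 p.2}.ncard

/-- The bipartite graph `B` contains an ordered copy of the bipartite graph `R`. -/
def OrdContains {α β : Type*} (R : α → β → Prop) {m n : ℕ}
    (B : Fin m → Fin n → Prop) : Prop :=
  ∃ f : α ↪ Fin m, ∃ g : β ↪ Fin n, ∀ a b, R a b → B (f a) (g b)

/-- The Zarankiewicz number of an (ordered) bipartite graph `R`. -/
noncomputable def Zar {α β : Type*} (R : α → β → Prop) (m n : ℕ) : ℕ :=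
  sSup {k | ∃ B : Fin m → Fin n → Prop, ¬ OrdContains R B ∧ bipCount B = k}

/-- The bipartite graph (on `α ⊕ β`) associated with a relation `R : α → β → Prop`. -/
def sumGraph {α β : Type*} (R : α → β → Prop) : SimpleGraph (α ⊕ β) :=
  SimpleGraph.fromRel (fun x y => ∃ a b, x = Sum.inl a ∧ y = Sum.inr b ∧ R a b)


section ErdosAux
open Finset SimpleGraph

lemma support_getElem_eq_getVert {V} {G : SimpleGraph V} {u v : V} (p : G.Walk u v) (i : ℕ)
    (h : i < p.support.length) : p.support[i] = p.getVert i := by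
  induction p generalizing i with
  | nil => simp at h; simp [h]
  | cons hadj q ih =>
    cases i with
    | zero => simp
    | succ j => simp only [Walk.support_cons, Walk.getVert_cons_succ, List.getElem_cons_succ]; exact ih _ _

lemma cycle_getVert_injOn {V} {G : SimpleGraph V} {v : V} {c : G.Walk v v} (hc : c.IsCycle)
    {i j : ℕ} (hi : i < c.length) (hj : j < c.length) (h : c.getVert i = c.getVert j) : i = j := by
  have hnd : c.support.tail.Nodup := hc.support_nodup
  have hlen : c.support.length = c.length + 1 := c.length_support
  have htl : c.support.tail.length = c.length := by simp [hlen]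
  have key : ∀ k, 1 ≤ k → (hk : k ≤ c.length) → ∀ (h' : k - 1 < c.support.tail.length),
      c.support.tail[k-1] = c.getVert k := by
    intro k h1 hk h'
    rw [List.getElem_tail]
    have : k - 1 + 1 = k := Nat.succ_pred_eq_of_pos h1
    simp_rw [this]
    exact support_getElem_eq_getVert _ _ (by omega)
  have hL3 := hc.three_le_length
  rcases Nat.eq_zero_or_pos i with hi0 | hi1
  · rcases Nat.eq_zero_or_pos j with hj0 | hj1
    · omega
    · exfalso
      have h0 : c.getVert i = c.getVert c.length := by
        rw [hi0, c.getVert_zero, c.getVert_length]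
      have e1 : c.support.tail[c.length - 1]'(by omega) = c.getVert c.length := key _ (by omega) le_rfl _
      have e2 : c.support.tail[j - 1]'(by omega) = c.getVert j := key _ hj1 (by omega) _
      have := (hnd.getElem_inj_iff (i := c.length - 1) (hi := by omega) (j := j - 1) (hj := by omega)).mp (by rw [e1, e2, ← h0, h])
      omega
  · rcases Nat.eq_zero_or_pos j with hj0 | hj1
    · exfalso
      have h0 : c.getVert j = c.getVert c.length := by
        rw [hj0, c.getVert_zero, c.getVert_length]
      have e1 : c.support.tail[c.length - 1]'(by omega) = c.getVert c.length := key _ (by omega) le_rfl _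
      have e2 : c.support.tail[i - 1]'(by omega) = c.getVert i := key _ hi1 (by omega) _
      have := (hnd.getElem_inj_iff (i := c.length - 1) (hi := by omega) (j := i - 1) (hj := by omega)).mp (by rw [e1, e2, ← h0, ← h])
      omega
    · have e1 : c.support.tail[i - 1]'(by omega) = c.getVert i := key _ hi1 (by omega) _
      have e2 : c.support.tail[j - 1]'(by omega) = c.getVert j := key _ hj1 (by omega) _
      have := (hnd.getElem_inj_iff (i := i - 1) (hi := by omega) (j := j - 1) (hj := by omega)).mp (by rw [e1, e2, h])
      omega

lemma two_ne_zero_zmod {ℓ : ℕ} (hl : 3 ≤ ℓ) : (2 : ZMod ℓ) ≠ 0 := by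
  haveI : NeZero ℓ := ⟨by omega⟩
  intro hc
  have h2 : ℓ ∣ 2 := by exact_mod_cast (ZMod.natCast_eq_zero_iff 2 ℓ).mp (by exact_mod_cast hc)
  have := Nat.le_of_dvd (by norm_num) h2
  omega

lemma one_ne_zero_zmod {ℓ : ℕ} (hl : 3 ≤ ℓ) : (1 : ZMod ℓ) ≠ 0 := by
  haveI : NeZero ℓ := ⟨by omega⟩
  intro hc
  have h2 : ℓ ∣ 1 := by exact_mod_cast (ZMod.natCast_eq_zero_iff 1 ℓ).mp (by exact_mod_cast hc)
  have := Nat.le_of_dvd (by norm_num) h2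
  omega

lemma core_lemma (n ℓ m : ℕ) [NeZero ℓ] (hl : 3 ≤ ℓ) (hm : ℓ ≤ m) (hmN : m ≤ n.choose 2)
    (hineq : 2 * n ^ ℓ * m ^ ℓ ≤ m * (n.choose 2 + 1 - ℓ) ^ ℓ) :
    ∃ E' : Finset (Sym2 (Fin n)), (∀ e ∈ E', ¬ e.IsDiag) ∧ m ≤ 2 * E'.card ∧
      ∀ f : ZMod ℓ → Fin n, Function.Injective f → ¬ (∀ i, s(f i, f (i+1)) ∈ E') := by
  classical
  set K : Finset (Sym2 (Fin n)) := Finset.univ.filter (fun e => ¬ e.IsDiag) with hK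
  have hKcard : K.card = n.choose 2 := by
    rw [hK, ← Fintype.card_subtype, Sym2.card_subtype_not_diag, Fintype.card_fin]
  set N := n.choose 2 with hN
  set 𝒜 := Finset.powersetCard m K with h𝒜
  have h𝒜card : 𝒜.card = N.choose m := by rw [h𝒜, Finset.card_powersetCard, hKcard]
  have h𝒜ne : 𝒜.Nonempty := by
    rw [← Finset.card_pos, h𝒜card]; exact Nat.choose_pos hmN
  set bad : Finset (Sym2 (Fin n)) → Finset (ZMod ℓ → Fin n) :=
    fun E => Finset.univ.filter (fun f => Function.Injective f ∧ ∀ i, s(f i, f (i+1)) ∈ E) with hbad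
  -- cycle edge sets
  have cycEdges_card : ∀ f : ZMod ℓ → Fin n, Function.Injective f →
      (Finset.image (fun i => s(f i, f (i+1))) (Finset.univ : Finset (ZMod ℓ))).card = ℓ := by
    intro f hf
    rw [Finset.card_image_of_injective _ ?_, Finset.card_univ, ZMod.card]
    intro i j hij
    rw [Sym2.eq_iff] at hij
    rcases hij with ⟨h1, h2⟩ | ⟨h1, h2⟩
    · exact hf h1
    · exfalso
      have e1 : i = j + 1 := hf h1
      have e2 : i + 1 = j := hf h2
      have h3 : i = i + (1 + 1) := by rw [← add_assoc, e2, ← e1]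
      have : (1 + 1 : ZMod ℓ) = 0 := left_eq_add.mp h3
      exact two_ne_zero_zmod hl (by rwa [one_add_one_eq_two] at this)
  have count_sup : ∀ f : ZMod ℓ → Fin n, Function.Injective f →
      (𝒜.filter (fun E => ∀ i, s(f i, f (i+1)) ∈ E)).card ≤ (N - ℓ).choose (m - ℓ) := by
    intro f hf
    set S := Finset.image (fun i => s(f i, f (i+1))) (Finset.univ : Finset (ZMod ℓ)) with hS
    have hSK : S ⊆ K := by
      intro e he
      rw [hS, Finset.mem_image] at he
      obtain ⟨i, -, rfl⟩ := he
      rw [hK, Finset.mem_filter]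
      refine ⟨Finset.mem_univ _, ?_⟩
      rw [Sym2.mk_isDiag_iff]
      intro hfi
      exact one_ne_zero_zmod hl (left_eq_add.mp (hf hfi))
    have hScard : S.card = ℓ := cycEdges_card f hf
    have key : ∀ E ∈ 𝒜.filter (fun E => ∀ i, s(f i, f (i+1)) ∈ E), S ⊆ E ∧ E ⊆ K ∧ E.card = m := by
      intro E hE
      rw [Finset.mem_filter, h𝒜, Finset.mem_powersetCard] at hE
      refine ⟨?_, hE.1.1, hE.1.2⟩
      intro e he
      rw [hS, Finset.mem_image] at he
      obtain ⟨i, -, rfl⟩ := he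
      exact hE.2 i
    calc (𝒜.filter (fun E => ∀ i, s(f i, f (i+1)) ∈ E)).card
        ≤ (Finset.powersetCard (m - ℓ) (K \ S)).card := by
          apply Finset.card_le_card_of_injOn (fun E => E \ S)
          · intro E hE
            obtain ⟨hSE, hEK, hEc⟩ := key E hE
            simp only [Finset.mem_coe, Finset.mem_powersetCard]
            exact ⟨Finset.sdiff_subset_sdiff hEK Finset.Subset.rfl,
              by rw [Finset.card_sdiff_of_subset hSE, hEc, hScard]⟩
          · intro E1 h1 E2 h2 h12
            simp only at h12
            rw [← Finset.sdiff_union_of_subset (key E1 (Finset.mem_coe.mp h1)).1,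
              ← Finset.sdiff_union_of_subset (key E2 (Finset.mem_coe.mp h2)).1, h12]
      _ = (N - ℓ).choose (m - ℓ) := by
          rw [Finset.card_powersetCard, Finset.card_sdiff_of_subset hSK, hKcard, hScard]
  -- double counting
  have total : ∑ E ∈ 𝒜, (bad E).card ≤ n ^ ℓ * (N - ℓ).choose (m - ℓ) := by
    have swap : ∑ E ∈ 𝒜, (bad E).card
        = ∑ f ∈ (Finset.univ : Finset (ZMod ℓ → Fin n)),
            ∑ E ∈ 𝒜, (if Function.Injective f ∧ ∀ i, s(f i, f (i+1)) ∈ E then 1 else 0) := by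
      rw [Finset.sum_comm]
      refine Finset.sum_congr rfl fun E _ => ?_
      rw [hbad, Finset.card_filter]
    rw [swap]
    calc ∑ f ∈ (Finset.univ : Finset (ZMod ℓ → Fin n)), ∑ E ∈ 𝒜,
            (if Function.Injective f ∧ ∀ i, s(f i, f (i+1)) ∈ E then 1 else 0)
        ≤ ∑ _f ∈ (Finset.univ : Finset (ZMod ℓ → Fin n)), (N - ℓ).choose (m - ℓ) := by
          apply Finset.sum_le_sum
          intro f _
          by_cases hf : Function.Injective f
          · calc ∑ E ∈ 𝒜, (if Function.Injective f ∧ ∀ i, s(f i, f (i+1)) ∈ E then 1 else 0)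
                = (𝒜.filter (fun E => ∀ i, s(f i, f (i+1)) ∈ E)).card := by
                  rw [Finset.card_filter]
                  exact Finset.sum_congr rfl fun E _ => by simp [hf]
              _ ≤ _ := count_sup f hf
          · simp [hf]
      _ = n ^ ℓ * (N - ℓ).choose (m - ℓ) := by
          rw [Finset.sum_const, Finset.card_univ, Fintype.card_fun, ZMod.card, Fintype.card_fin,
            smul_eq_mul]
  -- ratio inequality
  have ratio : 2 * (n ^ ℓ * (N - ℓ).choose (m - ℓ)) ≤ N.choose m * m := by
    have hlN : ℓ ≤ N := le_trans hm hmN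
    have step1 : 2 * n ^ ℓ * m.choose ℓ ≤ m * N.choose ℓ := by
      have h1 : Nat.factorial ℓ * (2 * n ^ ℓ * m.choose ℓ) = 2 * n ^ ℓ * m.descFactorial ℓ := by
        rw [Nat.descFactorial_eq_factorial_mul_choose]; ring
      have h2 : Nat.factorial ℓ * (m * N.choose ℓ) = m * N.descFactorial ℓ := by
        rw [Nat.descFactorial_eq_factorial_mul_choose]; ring
      have h3 : 2 * n ^ ℓ * m.descFactorial ℓ ≤ m * N.descFactorial ℓ := by
        calc 2 * n ^ ℓ * m.descFactorial ℓ ≤ 2 * n ^ ℓ * m ^ ℓ :=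
              Nat.mul_le_mul_left _ (Nat.descFactorial_le_pow m ℓ)
          _ ≤ m * (N + 1 - ℓ) ^ ℓ := hineq
          _ ≤ m * N.descFactorial ℓ := Nat.mul_le_mul_left _ (Nat.pow_sub_le_descFactorial N ℓ)
      exact Nat.le_of_mul_le_mul_left (by rw [h1, h2]; exact h3) (Nat.factorial_pos ℓ)
    have hid : N.choose m * m.choose ℓ = N.choose ℓ * (N - ℓ).choose (m - ℓ) :=
      Nat.choose_mul (n := N) hm
    have hpos : 0 < N.choose ℓ := Nat.choose_pos hlN
    apply Nat.le_of_mul_le_mul_right _ hpos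
    calc 2 * (n ^ ℓ * (N - ℓ).choose (m - ℓ)) * N.choose ℓ
        = 2 * n ^ ℓ * (N.choose ℓ * (N - ℓ).choose (m - ℓ)) := by ring
      _ = 2 * n ^ ℓ * (N.choose m * m.choose ℓ) := by rw [hid]
      _ = N.choose m * (2 * n ^ ℓ * m.choose ℓ) := by ring
      _ ≤ N.choose m * (m * N.choose ℓ) := Nat.mul_le_mul_left _ step1
      _ = N.choose m * m * N.choose ℓ := by ring
  -- pick a good E
  have havg : ∃ E ∈ 𝒜, 2 * (bad E).card ≤ m := by
    apply Finset.exists_le_of_sum_le h𝒜ne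
    calc ∑ E ∈ 𝒜, 2 * (bad E).card = 2 * ∑ E ∈ 𝒜, (bad E).card := by rw [Finset.mul_sum]
      _ ≤ 2 * (n ^ ℓ * (N - ℓ).choose (m - ℓ)) := Nat.mul_le_mul_left _ total
      _ ≤ N.choose m * m := ratio
      _ = ∑ _E ∈ 𝒜, m := by rw [Finset.sum_const, h𝒜card, smul_eq_mul]
  obtain ⟨E, hE𝒜, hEbad⟩ := havg
  obtain ⟨hEK, hEcard⟩ := Finset.mem_powersetCard.mp (h𝒜 ▸ hE𝒜)
  set D := (bad E).image (fun f => s(f 0, f 1)) with hD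
  refine ⟨E \ D, ?_, ?_, ?_⟩
  · intro e he
    have : e ∈ K := hEK (Finset.sdiff_subset he)
    rw [hK, Finset.mem_filter] at this
    exact this.2
  · have h1 : E.card ≤ (E \ D).card + D.card := Finset.card_le_card_sdiff_add_card
    have h2 : D.card ≤ (bad E).card := Finset.card_image_le
    omega
  · intro f hf hall
    have hmem : f ∈ bad E := by
      rw [hbad, Finset.mem_filter]
      exact ⟨Finset.mem_univ _, hf, fun i => Finset.sdiff_subset (hall i)⟩
    have : s(f 0, f 1) ∈ D := Finset.mem_image_of_mem _ hmem
    have h0 := hall 0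
    rw [Finset.mem_sdiff, zero_add] at h0
    exact h0.2 this

end ErdosAux

set_option maxHeartbeats 2000000 in
theorem stmt10 {α : Type} [Fintype α] (F : SimpleGraph α)
    (hbip : ∃ c : α → Bool, ∀ a b, F.Adj a b → c a ≠ c b)
    (hcyc : ¬ F.IsAcyclic) :
    ∃ γ : ℝ, 0 < γ ∧ ∃ c : ℝ, 0 < c ∧ ∃ N : ℕ, ∀ n ≥ N,
      c * (n : ℝ) ^ (1 + γ) ≤ exG F n := by
  classical
  unfold SimpleGraph.IsAcyclic at hcyc
  push_neg at hcyc
  obtain ⟨v, c, hc⟩ := hcyc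
  set ℓ := c.length with hℓ
  have hl : 3 ≤ ℓ := hc.three_le_length
  haveI : NeZero ℓ := ⟨by omega⟩
  haveI : Fact (1 < ℓ) := ⟨by omega⟩
  have hl1 : (0:ℝ) < (ℓ:ℝ) - 1 := by
    have : (3:ℝ) ≤ (ℓ:ℝ) := by exact_mod_cast hl
    linarith
  set γ : ℝ := 1 / ((ℓ:ℝ) - 1) with hγ
  have hγpos : 0 < γ := by positivity
  have hγle : γ ≤ 1 := by
    have h3 : (3:ℝ) ≤ (ℓ:ℝ) := by exact_mod_cast hl
    rw [hγ, div_le_one hl1]; linarith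
  refine ⟨γ, hγpos, 1/128, by norm_num, 64 * (ℓ + 2), ?_⟩
  intro n hn
  have hn2 : 2 ≤ n := by omega
  have hn0 : (0:ℝ) ≤ (n:ℝ) := by positivity
  have hn1 : (1:ℝ) ≤ (n:ℝ) := by exact_mod_cast (by omega : 1 ≤ n)
  set x : ℝ := (n:ℝ) ^ (1 + γ) with hx
  have hxpos : 0 < x := Real.rpow_pos_of_pos (by linarith) _
  have hxn : (n:ℝ) ≤ x := by
    calc (n:ℝ) = (n:ℝ) ^ (1:ℝ) := (Real.rpow_one _).symm
      _ ≤ x := Real.rpow_le_rpow_of_exponent_le hn1 (by linarith)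
  have hxn2 : x ≤ (n:ℝ)^2 := by
    calc x ≤ (n:ℝ) ^ (2:ℝ) := Real.rpow_le_rpow_of_exponent_le hn1 (by linarith)
      _ = (n:ℝ)^2 := by rw [← Real.rpow_natCast (n:ℝ) 2]; norm_num
  set m : ℕ := ⌊x / 32⌋₊ with hm
  have hm1 : (m:ℝ) ≤ x / 32 := Nat.floor_le (by positivity)
  have hx64 : (64:ℝ) * (ℓ + 2) ≤ x := by
    refine le_trans ?_ hxn
    exact_mod_cast hn
  have hm2 : x / 64 ≤ (m:ℝ) := by
    have h1 : x / 32 < (m:ℝ) + 1 := Nat.lt_floor_add_one _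
    have hℓ0 : (0:ℝ) ≤ (ℓ:ℝ) := by positivity
    nlinarith
  have hlm : ℓ ≤ m := by
    have : (ℓ:ℝ) ≤ (m:ℝ) := by nlinarith
    exact_mod_cast this
  have hchoose2 : ((n.choose 2 : ℕ) : ℝ) = (n:ℝ) * ((n:ℝ) - 1) / 2 := Nat.cast_choose_two ℝ n
  have hmN : m ≤ n.choose 2 := by
    have : (m:ℝ) ≤ ((n.choose 2 : ℕ):ℝ) := by
      rw [hchoose2]
      have h2 : (2:ℝ) ≤ (n:ℝ) := by exact_mod_cast hn2
      nlinarith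
    exact_mod_cast this
  -- key power identity : x ^ (ℓ - 1) = n ^ ℓ
  have hxpow : x ^ (ℓ - 1) = (n:ℝ) ^ ℓ := by
    have h1 : ((ℓ - 1 : ℕ) : ℝ) = (ℓ:ℝ) - 1 := by
      have : 1 ≤ ℓ := by omega
      push_cast [this]; ring
    calc x ^ (ℓ - 1) = x ^ ((ℓ - 1 : ℕ) : ℝ) := (Real.rpow_natCast _ _).symm
      _ = (n:ℝ) ^ ((1 + γ) * ((ℓ:ℝ) - 1)) := by
          rw [hx, ← Real.rpow_mul hn0, h1]
      _ = (n:ℝ) ^ ((ℓ:ℝ)) := by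
          congr 1
          rw [hγ]
          field_simp
          ring
      _ = (n:ℝ) ^ ℓ := Real.rpow_natCast _ _
  -- the ℕ inequality
  have hlN1 : ℓ ≤ n.choose 2 + 1 := by omega
  have hQ : ((n:ℝ)^2) / 4 ≤ ((n.choose 2 + 1 - ℓ : ℕ) : ℝ) := by
    have hcast : ((n.choose 2 + 1 - ℓ : ℕ) : ℝ) = ((n.choose 2 : ℕ):ℝ) + 1 - (ℓ:ℝ) := by
      push_cast [Nat.cast_sub hlN1]; ring
    rw [hcast, hchoose2]
    have h4 : (4:ℝ) * (ℓ + 2) ≤ (n:ℝ) := by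
      have : ((64 * (ℓ + 2) : ℕ) : ℝ) ≤ (n:ℝ) := by exact_mod_cast hn
      push_cast at this
      linarith
    have hl3 : (3:ℝ) ≤ (ℓ:ℝ) := by exact_mod_cast hl
    nlinarith
  have hineq : 2 * n ^ ℓ * m ^ ℓ ≤ m * (n.choose 2 + 1 - ℓ) ^ ℓ := by
    have hR : (2:ℝ) * (n:ℝ) ^ ℓ * (m:ℝ) ^ ℓ ≤ (m:ℝ) * ((n.choose 2 + 1 - ℓ : ℕ):ℝ) ^ ℓ := by
      have hm0 : (0:ℝ) ≤ (m:ℝ) := by positivity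
      calc (2:ℝ) * (n:ℝ) ^ ℓ * (m:ℝ) ^ ℓ
          ≤ 2 * (n:ℝ) ^ ℓ * (x / 32) ^ ℓ := by gcongr
        _ = 2 * (n:ℝ) ^ ℓ * (x ^ ℓ / 32 ^ ℓ) := by rw [div_pow]
        _ = 2 * (n:ℝ) ^ ℓ * ((x ^ (ℓ-1) * x) / 32 ^ ℓ) := by
            congr 2
            rw [← pow_succ]
            congr 1
            omega
        _ = 2 * ((n:ℝ) ^ ℓ * (n:ℝ) ^ ℓ) * x / 32 ^ ℓ := by rw [hxpow]; ring
        _ ≤ (x / 64) * (((n:ℝ)^2)/4) ^ ℓ := by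
            rw [div_pow, ← pow_mul]
            have hpow : (n:ℝ) ^ ℓ * (n:ℝ) ^ ℓ = (n:ℝ) ^ (2 * ℓ) := by
              rw [← pow_add]; congr 1; omega
            rw [hpow]
            set A := (n:ℝ)^(2*ℓ) with hA
            set B := (4:ℝ)^ℓ with hB
            set C := (8:ℝ)^ℓ with hC'
            have hA0 : (0:ℝ) ≤ A := by positivity
            have hB0 : (0:ℝ) < B := by positivity
            have hC : (128:ℝ) ≤ C := by
              calc (128:ℝ) ≤ 8^3 := by norm_num
                _ ≤ (8:ℝ)^ℓ := by gcongr <;> norm_num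
            have h32 : (32:ℝ)^ℓ = B * C := by rw [hB, hC', ← mul_pow]; norm_num
            rw [h32, show x / 64 * (A / B) = x * A / (64 * B) by ring,
              div_le_div_iff₀ (by positivity) (by positivity)]
            nlinarith [mul_nonneg (sub_nonneg.mpr hC) (mul_nonneg (mul_nonneg hA0 hxpos.le) hB0.le)]
        _ ≤ (m:ℝ) * ((n.choose 2 + 1 - ℓ : ℕ):ℝ) ^ ℓ := by
            gcongr
    have := hR
    push_cast at this ⊢
    exact_mod_cast this
  obtain ⟨E', hdiag, hcard, hnocyc⟩ := core_lemma n ℓ m hl hlm hmN hineq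
  -- build the graph
  set G : SimpleGraph (Fin n) := SimpleGraph.fromEdgeSet (↑E' : Set (Sym2 (Fin n))) with hG
  have hGedge : G.edgeSet = (↑E' : Set (Sym2 (Fin n))) := by
    rw [hG, SimpleGraph.edgeSet_fromEdgeSet]
    ext e
    simp only [Set.mem_diff, Set.mem_setOf_eq, Finset.mem_coe, and_iff_left_iff_imp]
    exact fun he => hdiag e he
  have hGcard : G.edgeSet.ncard = E'.card := by rw [hGedge, Set.ncard_coe_finset]
  have hfree : ¬ GContains F G := by
    rintro ⟨φ, hφ⟩
    set g : ZMod ℓ → Fin n := fun i => φ (c.getVert i.val) with hg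
    have hginj : Function.Injective g := by
      intro i j hij
      have h1 := cycle_getVert_injOn hc (ZMod.val_lt i) (ZMod.val_lt j) (φ.injective hij)
      exact ZMod.val_injective ℓ h1
    apply hnocyc g hginj
    intro i
    have hval : (i + 1).val = (i.val + 1) % ℓ := by
      rw [ZMod.val_add, ZMod.val_one]
    have hadjF : F.Adj (c.getVert i.val) (c.getVert ((i+1).val)) := by
      rcases Nat.lt_or_ge (i.val + 1) ℓ with h | h
      · have : (i + 1).val = i.val + 1 := by rw [hval, Nat.mod_eq_of_lt h]
        rw [this]
        exact c.adj_getVert_succ (by omega)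
      · have hival : i.val = ℓ - 1 := by have := ZMod.val_lt i; omega
        have h0 : (i + 1).val = 0 := by
          rw [hval, hival]
          have : ℓ - 1 + 1 = ℓ := by omega
          rw [this, Nat.mod_self]
        rw [h0]
        have hadj := c.adj_getVert_succ (i := ℓ - 1) (by omega)
        have : ℓ - 1 + 1 = ℓ := by omega
        rw [this] at hadj
        rw [hival]
        have hvv : c.getVert ℓ = c.getVert 0 := by
          rw [c.getVert_zero, hℓ, c.getVert_length]
        rwa [hvv] at hadj
    have hadjG : G.Adj (g i) (g (i+1)) := hφ _ _ hadjF
    rw [hG, SimpleGraph.fromEdgeSet_adj] at hadjG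
    exact Finset.mem_coe.mp hadjG.1
  -- conclude
  have hmem : E'.card ∈ {k | ∃ G : SimpleGraph (Fin n), ¬ GContains F G ∧ G.edgeSet.ncard = k} :=
    ⟨G, hfree, hGcard⟩
  have hbdd : BddAbove {k | ∃ G : SimpleGraph (Fin n), ¬ GContains F G ∧ G.edgeSet.ncard = k} := by
    refine ⟨Fintype.card (Sym2 (Fin n)), ?_⟩
    rintro k ⟨H, -, rfl⟩
    calc H.edgeSet.ncard ≤ (Set.univ : Set (Sym2 (Fin n))).ncard :=
          Set.ncard_le_ncard (Set.subset_univ _) Set.finite_univ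
      _ = Fintype.card (Sym2 (Fin n)) := by rw [Set.ncard_univ, Nat.card_eq_fintype_card]
  have hle : E'.card ≤ exG F n := le_csSup hbdd hmem
  have hfin : x / 128 ≤ (E'.card : ℝ) := by
    have : (m:ℝ) ≤ 2 * (E'.card:ℝ) := by exact_mod_cast hcard
    linarith
  calc (1:ℝ)/128 * x = x / 128 := by ring
    _ ≤ (E'.card : ℝ) := hfin
    _ ≤ (exG F n : ℝ) := by exact_mod_cast hle
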